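/- For n ≥ 1 and k ≥ 1, the group BS(1, n^k) embeds as a finite index subgroup in BS(1, n); consequently BS(1, n^{k₁}) and BS(1, n^{k₂}) are commensurable for all k₁, k₂ ≥ 1. -/

import Mathlib

def AbstractlyCommensurable (G : Type*) (H : Type*) [Group G] [Group H] : Prop :=
  ∃ (A : Subgroup G) (B : Subgroup H), A.FiniteIndex ∧ B.FiniteIndex ∧ Nonempty (A ≃* B)

def BSRel (m n : ℤ) : Set (FreeGroup Bool) :=
  {(FreeGroup.of false)⁻¹ * FreeGroup.of true ^ m * FreeGroup.of false *
    (FreeGroup.of true ^ n)⁻¹}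

abbrev BS (m n : ℤ) : Type := PresentedGroup (BSRel m n)

namespace BSAux

open PresentedGroup Multiplicative SemidirectProduct

variable {ν : ℤ}

/-- the "t" generator -/
def tg : BS 1 ν := PresentedGroup.of true
/-- the "b" (stable letter) generator -/
def bg : BS 1 ν := PresentedGroup.of false

lemma bs_rel : (bg)⁻¹ * tg * bg = (tg : BS 1 ν) ^ ν := by
  have hmem : ((FreeGroup.of false)⁻¹ * FreeGroup.of true ^ (1:ℤ) * FreeGroup.of false *
      (FreeGroup.of true ^ ν)⁻¹) ∈ Subgroup.normalClosure (BSRel 1 ν) :=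
    Subgroup.subset_normalClosure rfl
  have h : (PresentedGroup.mk (BSRel 1 ν)) ((FreeGroup.of false)⁻¹ * FreeGroup.of true ^ (1:ℤ) *
      FreeGroup.of false * (FreeGroup.of true ^ ν)⁻¹) = 1 :=
    (QuotientGroup.eq_one_iff _).mpr hmem
  simp only [map_mul, map_inv, map_zpow] at h
  have h' : (bg⁻¹ * tg ^ (1:ℤ) * bg) * (tg ^ ν)⁻¹ = (1 : BS 1 ν) := h
  rw [zpow_one] at h'
  exact mul_inv_eq_one.mp h'

lemma r1 (z : ℤ) : bg⁻¹ * tg ^ z * bg = (tg : BS 1 ν) ^ (ν * z) := by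
  have h2 : bg⁻¹ * tg ^ z * bg = ((bg⁻¹ * tg * bg : BS 1 ν)) ^ z := by
    have h3 := map_zpow (MulAut.conj (bg⁻¹ : BS 1 ν)) tg z
    simpa [MulAut.conj_apply, mul_assoc] using h3
  rw [h2, bs_rel, ← zpow_mul]

lemma r3 (e : ℕ) (z : ℤ) : (bg ^ e)⁻¹ * tg ^ z * bg ^ e = (tg : BS 1 ν) ^ (ν ^ e * z) := by
  induction e generalizing z with
  | zero => simp
  | succ e ih =>
      have : ((bg : BS 1 ν) ^ (e+1))⁻¹ * tg ^ z * bg ^ (e+1)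
          = (bg ^ e)⁻¹ * (bg⁻¹ * tg ^ z * bg) * bg ^ e := by
        rw [pow_succ]; group
      rw [this, r1, ih]
      congr 1
      rw [pow_succ]
      ring

lemma r4 (e : ℕ) (z : ℤ) : (tg : BS 1 ν) ^ z * bg ^ e = bg ^ e * tg ^ (ν ^ e * z) := by
  rw [← r3 e z]; group

/-- normal-form subgroup: everything! -/
def NF (ν : ℤ) : Subgroup (BS 1 ν) where
  carrier := {g | ∃ (i j : ℕ) (z : ℤ), g = bg ^ i * tg ^ z * (bg ^ j)⁻¹}
  one_mem' := ⟨0, 0, 0, by simp⟩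
  inv_mem' := by
    rintro g ⟨i, j, z, rfl⟩
    exact ⟨j, i, -z, by group⟩
  mul_mem' := by
    rintro g g' ⟨i, j, z, rfl⟩ ⟨i', j', z', rfl⟩
    rcases le_or_gt j i' with h | h
    · refine ⟨i + (i' - j), j', ν ^ (i' - j) * z + z', ?_⟩
      have hb : ((bg : BS 1 ν) ^ j)⁻¹ * bg ^ i' = bg ^ (i' - j) := by
        have : (bg : BS 1 ν) ^ i' = bg ^ j * bg ^ (i' - j) := by
          rw [← pow_add, Nat.add_sub_cancel' h]
        rw [this]; group
      calc bg ^ i * tg ^ z * (bg ^ j)⁻¹ * (bg ^ i' * tg ^ z' * (bg ^ j')⁻¹)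
          = bg ^ i * (tg ^ z * ((bg ^ j)⁻¹ * bg ^ i')) * tg ^ z' * (bg ^ j')⁻¹ := by group
        _ = bg ^ i * (tg ^ z * bg ^ (i' - j)) * tg ^ z' * (bg ^ j')⁻¹ := by rw [hb]
        _ = bg ^ i * (bg ^ (i' - j) * tg ^ (ν ^ (i' - j) * z)) * tg ^ z' * (bg ^ j')⁻¹ := by
              rw [r4]
        _ = bg ^ (i + (i' - j)) * tg ^ (ν ^ (i' - j) * z + z') * (bg ^ j')⁻¹ := by
              rw [pow_add, zpow_add]; group
    · refine ⟨i, j' + (j - i'), z + ν ^ (j - i') * z', ?_⟩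
      have hb : ((bg : BS 1 ν) ^ j)⁻¹ * bg ^ i' = (bg ^ (j - i'))⁻¹ := by
        have : (bg : BS 1 ν) ^ j = bg ^ i' * bg ^ (j - i') := by
          rw [← pow_add, Nat.add_sub_cancel' h.le]
        rw [this]; group
      have he : ((bg : BS 1 ν) ^ (j - i'))⁻¹ * tg ^ z' = tg ^ (ν ^ (j - i') * z') *
          (bg ^ (j - i'))⁻¹ := by
        rw [← r3 (j - i') z']; group
      calc bg ^ i * tg ^ z * (bg ^ j)⁻¹ * (bg ^ i' * tg ^ z' * (bg ^ j')⁻¹)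
          = bg ^ i * tg ^ z * (((bg ^ j)⁻¹ * bg ^ i') * tg ^ z') * (bg ^ j')⁻¹ := by group
        _ = bg ^ i * tg ^ z * ((bg ^ (j - i'))⁻¹ * tg ^ z') * (bg ^ j')⁻¹ := by rw [hb]
        _ = bg ^ i * tg ^ z * (tg ^ (ν ^ (j - i') * z') * (bg ^ (j - i'))⁻¹) * (bg ^ j')⁻¹ := by
              rw [he]
        _ = bg ^ i * tg ^ (z + ν ^ (j - i') * z') * (bg ^ (j' + (j - i')))⁻¹ := by
              rw [zpow_add, pow_add]; group

lemma normal_form (g : BS 1 ν) : ∃ (i j : ℕ) (z : ℤ), g = bg ^ i * tg ^ z * (bg ^ j)⁻¹ := by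
  refine PresentedGroup.generated_by _ (NF ν) ?_ g
  intro x
  cases x with
  | true => exact ⟨0, 0, 1, by simp [tg]⟩
  | false => exact ⟨1, 0, 0, by simp [bg]⟩


/-! ### A faithful model: `ℚ ⋊ ℤ` -/

/-- `AddAut A` to `MulAut (Multiplicative A)` as a monoid hom. -/
def addAutToMulAut (A : Type*) [AddGroup A] : Multiplicative (AddAut A) →* MulAut (Multiplicative A) where
  toFun e := AddEquiv.toMultiplicative (toAdd e)
  map_one' := rfl
  map_mul' _ _ := rfl

/-- the action of `ℤ` on `ℚ` by powers of a unit -/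
def act (u : ℚˣ) : Multiplicative ℤ →* MulAut (Multiplicative ℚ) :=
  ((addAutToMulAut ℚ).comp (DistribMulAction.toAddAut ℚˣ ℚ)).comp (zpowersHom ℚˣ u)

abbrev Md (u : ℚˣ) : Type := Multiplicative ℚ ⋊[act u] Multiplicative ℤ

lemma act_apply (u : ℚˣ) (z : ℤ) (x : ℚ) :
    act u (ofAdd z) (ofAdd x) = ofAdd (((u ^ z : ℚˣ) : ℚ) * x) := rfl

/-- homomorphism `BS(1,ν) → ℚ ⋊ ℤ`, sending `t ↦ (1,0)`, `b ↦ (0,c)`. -/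
def bsHom (ν : ℤ) (u : ℚˣ) (c : ℤ) (hrel : (((u⁻¹ : ℚˣ) : ℚ)) ^ c = (ν : ℚ)) :
    BS 1 ν →* Md u :=
  PresentedGroup.toGroup (f := fun x => cond x (inl (ofAdd (1 : ℚ))) (inr (ofAdd c))) (by
    rintro r rfl
    simp only [map_mul, map_inv, map_zpow, FreeGroup.lift_apply_of, Bool.cond_true, Bool.cond_false]
    rw [zpow_one]
    have h1 : (inr (ofAdd c) : Md u)⁻¹ * inl (ofAdd (1 : ℚ)) * inr (ofAdd c)
        = inl ((act u (ofAdd c))⁻¹ (ofAdd (1 : ℚ))) := by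
      rw [← map_inv]; exact (inl_aut_inv _ _).symm
    rw [h1]
    have h2 : (act u (ofAdd c))⁻¹ (ofAdd (1 : ℚ)) = ofAdd ((ν : ℚ)) := by
      have : (act u (ofAdd c))⁻¹ = act u (ofAdd (-c)) := by
        rw [← map_inv]; rfl
      rw [this, act_apply, mul_one, ← hrel]
      congr 1
      rw [zpow_neg, ← inv_zpow]
      norm_num
    rw [h2]
    have h3 : (inl (ofAdd (1 : ℚ)) : Md u) ^ ν = inl (ofAdd ((ν : ℚ))) := by
      rw [← map_zpow, ← ofAdd_zsmul]
      norm_num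
    rw [h3, mul_inv_cancel])

lemma bsHom_tg (ν : ℤ) (u : ℚˣ) (c : ℤ) (hrel : (((u⁻¹ : ℚˣ) : ℚ)) ^ c = (ν : ℚ)) :
    bsHom ν u c hrel tg = inl (ofAdd (1 : ℚ)) :=
  PresentedGroup.toGroup.of _

lemma bsHom_bg (ν : ℤ) (u : ℚˣ) (c : ℤ) (hrel : (((u⁻¹ : ℚˣ) : ℚ)) ^ c = (ν : ℚ)) :
    bsHom ν u c hrel bg = inr (ofAdd c) :=
  PresentedGroup.toGroup.of _

lemma bs_injective (ν : ℤ) (u : ℚˣ) (c : ℤ) (hc : c ≠ 0) (f : BS 1 ν →* Md u)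
    (ht : f tg = inl (ofAdd (1 : ℚ))) (hb : f bg = inr (ofAdd c)) :
    Function.Injective f := by
  rw [injective_iff_map_eq_one]
  intro g hg
  obtain ⟨i, j, z, rfl⟩ := normal_form g
  have hfb : ∀ p : ℕ, f (bg ^ p) = inr (ofAdd (c * p)) := by
    intro p
    rw [map_pow, hb, ← map_pow, ← ofAdd_nsmul]
    congr 1
    simp [nsmul_eq_mul, mul_comm]
  have hft : f (tg ^ z) = inl (ofAdd ((z : ℚ))) := by
    rw [map_zpow, ht, ← map_zpow, ← ofAdd_zsmul]
    norm_num
  have key : f (bg ^ i * tg ^ z * (bg ^ j)⁻¹)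
      = inr (ofAdd (c * i)) * inl (ofAdd ((z : ℚ))) * (inr (ofAdd (c * j)))⁻¹ := by
    rw [map_mul, map_mul, map_inv, hfb, hfb, hft]
  rw [key] at hg
  -- first conclude i = j by applying rightHom
  have h1 := congrArg rightHom hg
  simp only [map_mul, map_inv, rightHom_inl, rightHom_inr, map_one, one_mul, mul_one] at h1
  have hij : (i : ℤ) = j := by
    have h2 : ofAdd (c * (i : ℤ)) = ofAdd (c * (j : ℤ)) := by
      rwa [mul_inv_eq_one] at h1
    exact mul_left_cancel₀ hc (ofAdd.injective h2)
  have hij' : i = j := by exact_mod_cast hij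
  subst hij'
  -- now conclude z = 0
  have h3 : (inl (act u (ofAdd (c * i)) (ofAdd ((z : ℚ)))) : Md u) = 1 := by
    rw [inl_aut, map_inv]
    exact hg
  have h4 : ((u ^ (c * (i : ℤ)) : ℚˣ) : ℚ) * (z : ℚ) = 0 := by
    have := inl_injective (h3.trans (map_one inl).symm)
    · exact ofAdd.injective this
  have h5 : (z : ℚ) = 0 := by
    rcases mul_eq_zero.mp h4 with h | h
    · exact absurd h (Units.ne_zero _)
    · exact h
  have h6 : z = 0 := by exact_mod_cast h5
  subst h6
  simp

/-- the projection to ℤ -/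
def piHom (ν : ℤ) : BS 1 ν →* Multiplicative ℤ :=
  PresentedGroup.toGroup (f := fun x => cond x 1 (ofAdd 1)) (by
    rintro r rfl
    simp)

lemma piHom_tg (ν : ℤ) : piHom ν tg = 1 := PresentedGroup.toGroup.of _
lemma piHom_bg (ν : ℤ) : piHom ν bg = ofAdd 1 := PresentedGroup.toGroup.of _

/-- the embedding `BS(1, n^k) → BS(1, n)`, `t ↦ t`, `b ↦ b^k`. -/
def phiHom (n : ℤ) (k : ℕ) : BS 1 (n ^ k) →* BS 1 n :=
  PresentedGroup.toGroup (f := fun x => cond x tg (bg ^ k)) (by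
    rintro r rfl
    simp only [map_mul, map_inv, map_zpow, FreeGroup.lift_apply_of, Bool.cond_true, Bool.cond_false]
    rw [zpow_one]
    have h := r3 (ν := n) k 1
    rw [mul_one, zpow_one] at h
    rw [h, mul_inv_cancel])

lemma phiHom_tg (n : ℤ) (k : ℕ) : phiHom n k tg = tg := PresentedGroup.toGroup.of _
lemma phiHom_bg (n : ℤ) (k : ℕ) : phiHom n k bg = bg ^ k := PresentedGroup.toGroup.of _

/-! ### range of `phiHom` equals the preimage of `kℤ` -/

lemma mem_toSubgroup_zmultiples (a : ℤ) (x : Multiplicative ℤ) :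
    x ∈ AddSubgroup.toSubgroup (AddSubgroup.zmultiples a) ↔ ∃ w : ℤ, w * a = toAdd x := by
  constructor
  · rintro ⟨w, hw⟩
    exact ⟨w, by simpa [smul_eq_mul] using hw⟩
  · rintro ⟨w, hw⟩
    exact ⟨w, by simpa [smul_eq_mul] using hw⟩

lemma piHom_surjective (ν : ℤ) : Function.Surjective (piHom ν) := by
  intro x
  refine ⟨bg ^ (toAdd x), ?_⟩
  rw [map_zpow, piHom_bg, ← ofAdd_zsmul]
  simp

section Main

variable (n k : ℕ)

/-- the preimage of `kℤ` under the projection -/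
def KK : Subgroup (BS 1 (n : ℤ)) :=
  Subgroup.comap (piHom (n : ℤ)) (AddSubgroup.toSubgroup (AddSubgroup.zmultiples (k : ℤ)))

lemma mem_KK (g : BS 1 (n : ℤ)) :
    g ∈ KK n k ↔ piHom (n : ℤ) g ∈ AddSubgroup.toSubgroup (AddSubgroup.zmultiples (k : ℤ)) :=
  Iff.rfl

lemma range_le_KK : ∀ g, phiHom (n : ℤ) k g ∈ KK n k := by
  have key : ∀ g, g ∈ (KK n k).comap (phiHom (n : ℤ) k) := by
    intro g
    refine PresentedGroup.generated_by _ _ ?_ g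
    intro x
    rw [Subgroup.mem_comap]
    cases x with
    | true =>
        show phiHom (n : ℤ) k tg ∈ KK n k
        rw [phiHom_tg, mem_KK, piHom_tg, mem_toSubgroup_zmultiples]
        exact ⟨0, by simp⟩
    | false =>
        show phiHom (n : ℤ) k bg ∈ KK n k
        rw [phiHom_bg, mem_KK, map_pow, piHom_bg, ← ofAdd_nsmul, mem_toSubgroup_zmultiples]
        exact ⟨1, by simp⟩
  intro g
  exact Subgroup.mem_comap.mp (key g)

lemma piHom_normal_form (ν : ℤ) (i j : ℕ) (z : ℤ) :
    piHom ν (bg ^ i * tg ^ z * (bg ^ j)⁻¹) = ofAdd ((i : ℤ) - (j : ℤ)) := by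
  rw [map_mul, map_mul, map_inv, map_pow, map_pow, map_zpow, piHom_bg, piHom_tg,
    ← ofAdd_nsmul, ← ofAdd_nsmul]
  simp [sub_eq_add_neg]

lemma KK_le_range (hk : 1 ≤ k) : ∀ g ∈ KK n k, g ∈ (phiHom (n : ℤ) k).range := by
  intro g hg
  obtain ⟨i, j, z, rfl⟩ := normal_form g
  rw [mem_KK, piHom_normal_form, mem_toSubgroup_zmultiples] at hg
  obtain ⟨w, hw⟩ := hg
  rw [toAdd_ofAdd] at hw
  -- g = (bg^i tg^z bg^{-i}) * bg^{(i:ℤ)-(j:ℤ)}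
  have hsplit : bg ^ i * tg ^ z * ((bg : BS 1 (n:ℤ)) ^ j)⁻¹
      = (bg ^ i * tg ^ z * (bg ^ i)⁻¹) * bg ^ ((i : ℤ) - (j : ℤ)) := by
    rw [zpow_sub, ← zpow_natCast bg i, ← zpow_natCast bg j]
    group
  rw [hsplit]
  refine Subgroup.mul_mem _ ?_ ?_
  · -- conjugate part
    have hd : i + (k - 1) * i = k * i := by
      conv_rhs => rw [← Nat.sub_add_cancel hk]
      ring
    have hA : (bg : BS 1 (n:ℤ)) ^ i * tg ^ z * (bg ^ i)⁻¹
        = phiHom (n : ℤ) k (bg ^ i * tg ^ ((n : ℤ) ^ ((k - 1) * i) * z) * (bg ^ i)⁻¹) := by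
      rw [map_mul, map_mul, map_inv, map_pow, map_zpow, phiHom_bg, phiHom_tg]
      rw [← pow_mul, ← hd, pow_add]
      have h3 := r3 (ν := (n : ℤ)) ((k - 1) * i) z
      calc bg ^ i * tg ^ z * (bg ^ i)⁻¹
          = bg ^ i * (bg ^ ((k-1)*i) * tg ^ ((n:ℤ) ^ ((k-1)*i) * z) * (bg ^ ((k-1)*i))⁻¹)
            * (bg ^ i)⁻¹ := by
            rw [← h3]; group
        _ = bg ^ i * bg ^ ((k-1)*i) * tg ^ ((n:ℤ) ^ ((k-1)*i) * z)
            * (bg ^ i * bg ^ ((k-1)*i))⁻¹ := by group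
    rw [hA]
    exact ⟨_, rfl⟩
  · -- power part : bg^{i-j} = φ(bg^w)
    refine ⟨bg ^ w, ?_⟩
    rw [map_zpow, phiHom_bg, ← zpow_natCast bg k, ← zpow_mul, mul_comm, hw]

end Main

/-! ### main embedding result -/

lemma part1 (n k : ℕ) (hn : 1 ≤ n) (hk : 1 ≤ k) :
    ∃ H : Subgroup (BS 1 (n : ℤ)), H.FiniteIndex ∧
      Nonempty (BS 1 ((n : ℤ) ^ k) ≃* H) := by
  have hn0 : (n : ℚ) ≠ 0 := by positivity
  set u : ℚˣ := (Units.mk0 (n : ℚ) hn0)⁻¹ with hu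
  have hval : ((u⁻¹ : ℚˣ) : ℚ) = (n : ℚ) := by rw [hu, inv_inv]; simp
  have hrelψ : (((u⁻¹ : ℚˣ) : ℚ)) ^ (1 : ℤ) = (((n : ℤ) : ℚ)) := by
    rw [hval, zpow_one]; simp
  have hrelχ : (((u⁻¹ : ℚˣ) : ℚ)) ^ (k : ℤ) = ((((n : ℤ) ^ k : ℤ)) : ℚ) := by
    rw [hval, zpow_natCast]; push_cast; ring
  set ψ := bsHom (n : ℤ) u 1 hrelψ with hψ
  set χ := bsHom ((n : ℤ) ^ k) u k hrelχ with hχ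
  have hcomp : χ = ψ.comp (phiHom (n : ℤ) k) := by
    apply PresentedGroup.ext
    intro x
    cases x with
    | true =>
        show χ tg = ψ (phiHom (n : ℤ) k tg)
        rw [phiHom_tg, hχ, hψ, bsHom_tg, bsHom_tg]
    | false =>
        show χ bg = ψ (phiHom (n : ℤ) k bg)
        rw [phiHom_bg, hχ, hψ, bsHom_bg, map_pow, bsHom_bg, ← map_pow, ← ofAdd_nsmul]
        simp [nsmul_eq_mul]
  have hχinj : Function.Injective χ :=
    bs_injective _ u (k : ℤ) (by exact_mod_cast Nat.one_le_iff_ne_zero.mp hk)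
      χ (bsHom_tg _ _ _ _) (bsHom_bg _ _ _ _)
  have hφinj : Function.Injective (phiHom (n : ℤ) k) := by
    intro a b hab
    apply hχinj
    rw [hcomp]
    simp only [MonoidHom.comp_apply, hab]
  refine ⟨(phiHom (n : ℤ) k).range, ?_, ⟨MonoidHom.ofInjective hφinj⟩⟩
  have hrange : (phiHom (n : ℤ) k).range = KK n k := by
    apply le_antisymm
    · rintro x ⟨g, rfl⟩
      exact range_le_KK n k g
    · exact KK_le_range n k hk
  constructor
  rw [hrange, KK, Subgroup.index_comap_of_surjective _ (piHom_surjective _),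
    AddSubgroup.index_toSubgroup, Int.index_zmultiples]
  simpa using Nat.one_le_iff_ne_zero.mp hk

end BSAux

theorem BS_one_npow_commensurable (n k : ℕ) (hn : 1 ≤ n) (hk : 1 ≤ k) :
    (∃ H : Subgroup (BS 1 (n : ℤ)), H.FiniteIndex ∧
      Nonempty (BS 1 ((n : ℤ) ^ k) ≃* H)) ∧
    (∀ k₁ k₂ : ℕ, 1 ≤ k₁ → 1 ≤ k₂ →
      AbstractlyCommensurable (BS 1 ((n : ℤ) ^ k₁)) (BS 1 ((n : ℤ) ^ k₂))) := by
  constructor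
  · exact BSAux.part1 n k hn hk
  · intro k₁ k₂ hk₁ hk₂
    obtain ⟨H₁, hH₁, ⟨e₁⟩⟩ := BSAux.part1 n k₁ hn hk₁
    obtain ⟨H₂, hH₂, ⟨e₂⟩⟩ := BSAux.part1 n k₂ hn hk₂
    haveI := hH₁; haveI := hH₂
    set L : Subgroup (BS 1 (n : ℤ)) := H₁ ⊓ H₂ with hL
    haveI hLfin : L.FiniteIndex := inferInstance
    -- a helper producing the finite-index pullback and equivalence on each side
    have helper : ∀ (k' : ℕ) (H : Subgroup (BS 1 (n : ℤ))) (_ : L ≤ H)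
        (e : BS 1 ((n : ℤ) ^ k') ≃* H),
        ∃ A : Subgroup (BS 1 ((n : ℤ) ^ k')), A.FiniteIndex ∧ Nonempty (A ≃* L) := by
      intro k' H hLE e
      refine ⟨Subgroup.comap e.toMonoidHom (L.subgroupOf H), ?_, ?_⟩
      · constructor
        rw [Subgroup.index_comap_of_surjective _ e.surjective]
        have hmul := Subgroup.relIndex_mul_index hLE
        intro h0
        have : L.relIndex H = 0 := h0
        rw [this, zero_mul] at hmul
        exact hLfin.index_ne_zero hmul.symm
      · have hmap : Subgroup.map e.toMonoidHom
            (Subgroup.comap e.toMonoidHom (L.subgroupOf H)) = L.subgroupOf H :=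
          Subgroup.map_comap_eq_self_of_surjective e.surjective _
        exact ⟨(e.subgroupMap _).trans ((MulEquiv.subgroupCongr hmap).trans
          (Subgroup.subgroupOfEquivOfLe hLE))⟩
    obtain ⟨A, hA, ⟨eA⟩⟩ := helper k₁ H₁ inf_le_left e₁
    obtain ⟨B, hB, ⟨eB⟩⟩ := helper k₂ H₂ inf_le_right e₂
    exact ⟨A, B, hA, hB, ⟨eA.trans eB.symm⟩⟩
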